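/- arXiv:2305.02692 — 5 statements merged into one kernel-verified Lean document; each statement's English description precedes it below -/
import Mathlib

section
/- For every k ∈ ℤ∖{0} and a, b, c, d ∈ ℂ with a ≠ 0, the linear map φ of the centerless twisted Heisenberg–Virasoro algebra 𝒲 defined on basis elements by φ(L_n) = (1/k)aⁿL_{kn} + aⁿ(cn+d)I_{kn} and φ(I_n) = aⁿ b I_{kn} for all n ∈ ℤ is a Lie algebra endomorphism of 𝒲, i.e. φ([x,y]) = [φ(x), φ(y)] for all x, y ∈ 𝒲. -/
/-- Basis of the centerless twisted Heisenberg–Virasoro algebra. -/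
inductive WBasis
  | L : ℤ → WBasis
  | I : ℤ → WBasis

/-- The underlying ℂ-vector space with basis `{L n, I n : n ∈ ℤ}`. -/
abbrev W : Type := WBasis →₀ ℂ

noncomputable def Ln (n : ℤ) : W := Finsupp.single (WBasis.L n) 1
noncomputable def In (n : ℤ) : W := Finsupp.single (WBasis.I n) 1

/-- Bracket on basis elements:
`[L n, L m] = (n-m) L (n+m)`, `[L n, I m] = -m I (n+m)`, `[I n, I m] = 0`. -/
noncomputable def brkt : WBasis → WBasis → W
  | WBasis.L n, WBasis.L m => ((n : ℂ) - m) • Ln (n + m)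
  | WBasis.L n, WBasis.I m => (-(m : ℂ)) • In (n + m)
  | WBasis.I n, WBasis.L m => (n : ℂ) • In (m + n)
  | WBasis.I _, WBasis.I _ => 0

/-- The bilinear extension of `brkt` to all of `W`. -/
noncomputable def br : W →ₗ[ℂ] W →ₗ[ℂ] W :=
  Finsupp.lift (W →ₗ[ℂ] W) ℂ WBasis fun i =>
    Finsupp.lift W ℂ WBasis fun j => brkt i j

/-- The linear map determined on basis elements by
`φ(L n) = (1/k) aⁿ L (kn) + aⁿ(cn+d) I (kn)` and `φ(I n) = aⁿ b I (kn)`. -/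
noncomputable def φmap (k : ℤ) (a b c d : ℂ) : W →ₗ[ℂ] W :=
  Finsupp.lift W ℂ WBasis fun i =>
    match i with
    | WBasis.L n => (1 / (k : ℂ) * a ^ n) • Ln (k * n) + (a ^ n * (c * n + d)) • In (k * n)
    | WBasis.I n => (a ^ n * b) • In (k * n)


lemma lift_single (f : WBasis → W) (i : WBasis) (r : ℂ) :
    Finsupp.lift W ℂ WBasis f (Finsupp.single i r) = r • f i := by
  simp [Finsupp.lift_apply, Finsupp.sum_single_index]

lemma br_single (i j : WBasis) (r s : ℂ) :
    br (Finsupp.single i r) (Finsupp.single j s) = (r * s) • brkt i j := by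
  simp [br, Finsupp.lift_apply, Finsupp.sum_single_index, mul_smul]

/-- For every `k ∈ ℤ∖{0}` and `a,b,c,d ∈ ℂ` with `a ≠ 0`, the map `φmap k a b c d`
is a Lie algebra endomorphism of the centerless twisted Heisenberg–Virasoro algebra. -/
theorem φmap_is_endomorphism (k : ℤ) (hk : k ≠ 0) (a b c d : ℂ) (ha : a ≠ 0) :
    ∀ x y : W, φmap k a b c d (br x y) = br (φmap k a b c d x) (φmap k a b c d y) := by
  intro x y
  induction x using Finsupp.induction_linear with
  | zero => simp
  | add f g hf hg => simp only [map_add, LinearMap.add_apply, hf, hg]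
  | single i r =>
    induction y using Finsupp.induction_linear with
    | zero => simp
    | add f g hf hg => simp only [map_add, hf, hg]
    | single j s =>
      have hkc : (k : ℂ) ≠ 0 := Int.cast_ne_zero.mpr hk
      cases i with
      | L n =>
        cases j with
        | L m =>
          simp only [br_single, brkt, Ln, In, map_smul, φmap, lift_single, one_smul, map_add,
            LinearMap.add_apply, LinearMap.smul_apply, smul_add, smul_smul, mul_add, add_comm (k * m) (k * n)]
          match_scalars
          · push_cast
            rw [zpow_add₀ ha]
            field_simp
          · push_cast
            rw [zpow_add₀ ha]
            field_simp
            ring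
        | I m =>
          simp only [br_single, brkt, Ln, In, map_smul, φmap, lift_single, one_smul, map_add,
            LinearMap.add_apply, LinearMap.smul_apply, smul_add, smul_smul, mul_add,
            add_comm (k * m) (k * n), smul_zero, map_zero, mul_zero, zero_smul]
          match_scalars <;> push_cast <;> (try rw [zpow_add₀ ha]) <;> field_simp <;> ring
      | I n =>
        cases j with
        | L m =>
          simp only [br_single, brkt, Ln, In, map_smul, φmap, lift_single, one_smul, map_add,
            LinearMap.add_apply, LinearMap.smul_apply, smul_add, smul_smul, mul_add,
            add_comm (k * m) (k * n), smul_zero, map_zero, mul_zero, zero_smul]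
          match_scalars <;> push_cast <;> (try rw [zpow_add₀ ha]) <;> field_simp <;> ring
        | I m =>
          simp only [br_single, brkt, Ln, In, map_smul, φmap, lift_single, one_smul, map_add,
            LinearMap.add_apply, LinearMap.smul_apply, smul_add, smul_smul, mul_add,
            add_comm (k * m) (k * n), smul_zero, map_zero, mul_zero, zero_smul]
end

section
/- Let L be a ℂ-vector space, let b : L × L → L be a bilinear map with b(x,y) = −b(y,x) for all x, y, and let φ : L → L be a linear isomorphism such that b(φ(x), b(y,z)) + b(φ(y), b(z,x)) + b(φ(z), b(x,y)) = 0 and φ(b(x,y)) = b(φ(x), φ(y)) for all x, y, z (i.e. (L, b, φ) is a regular multiplicative Hom-Lie algebra). Then the bracket [x,y] := φ⁻¹(b(x,y)) satisfies the Jacobi identity, so (L, [·,·]) is a Lie algebra; moreover φ is a Lie algebra endomorphism of (L, [·,·]) and φ([x,y]) = b(x,y) for all x, y, so (L, [·,·]) is the induced Lie algebra of (L, b, φ). -/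
/-- A regular multiplicative Hom-Lie algebra `(L, b, φ)` induces a Lie algebra
structure `[x,y] := φ⁻¹(b x y)`: the induced bracket satisfies the Jacobi
identity, `φ` is an endomorphism of the induced Lie algebra, and
`φ [x,y] = b x y`. -/
theorem regular_hom_lie_induces_lie (L : Type*) [AddCommGroup L] [Module ℂ L]
    (b : L →ₗ[ℂ] L →ₗ[ℂ] L) (φ : L ≃ₗ[ℂ] L)
    (hskew : ∀ x y : L, b x y = -b y x)
    (hjac : ∀ x y z : L, b (φ x) (b y z) + b (φ y) (b z x) + b (φ z) (b x y) = 0)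
    (hmul : ∀ x y : L, φ (b x y) = b (φ x) (φ y)) :
    (∀ x y z : L,
      φ.symm (b x (φ.symm (b y z))) + φ.symm (b y (φ.symm (b z x))) +
        φ.symm (b z (φ.symm (b x y))) = 0) ∧
    (∀ x y : L, φ (φ.symm (b x y)) = φ.symm (b (φ x) (φ y))) ∧
    (∀ x y : L, φ (φ.symm (b x y)) = b x y) := by
  have key : ∀ x y : L, φ.symm (b x y) = b (φ.symm x) (φ.symm y) := by
    intro x y
    have := hmul (φ.symm x) (φ.symm y)
    simp only [LinearEquiv.apply_symm_apply] at this
    rw [← this, LinearEquiv.symm_apply_apply]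
  refine ⟨?_, ?_, ?_⟩
  · intro x y z
    have h := hjac (φ.symm x) (φ.symm y) (φ.symm z)
    simp only [LinearEquiv.apply_symm_apply] at h
    rw [← map_add, ← map_add, key y z, key z x, key x y, h, map_zero]
  · intro x y
    rw [LinearEquiv.apply_symm_apply, key, LinearEquiv.symm_apply_apply,
      LinearEquiv.symm_apply_apply]
  · intro x y
    exact φ.apply_symm_apply _
end

section
/- Let g be a Lie algebra over ℂ, φ : g → g a Lie algebra homomorphism, V a ℂ-vector space, ϕ : V → V an invertible linear map, and ρ_φ : g → End(V) a linear map satisfying, for all x, y ∈ g: (R1) ρ_φ(φ([x,y])) ∘ ϕ = ρ_φ(φ(x)) ∘ ρ_φ(y) − ρ_φ(φ(y)) ∘ ρ_φ(x), and (R2) ρ_φ(φ(x)) ∘ ϕ = ϕ ∘ ρ_φ(x). Then ρ := ϕ⁻¹ ∘ ρ_φ (i.e. ρ(x) = ϕ⁻¹ ∘ ρ_φ(x)) satisfies ρ([x,y]) = ρ(x) ∘ ρ(y) − ρ(y) ∘ ρ(x) for all x, y ∈ g, i.e. ρ is a representation of the Lie algebra g on V. -/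
/-- If `(V, ρ_φ, ϕ)` is a representation of the multiplicative Hom-Lie algebra
obtained from a Lie algebra `g` and an endomorphism `φ` by the Yau twist, and
`ϕ` is invertible, then `ρ := ϕ⁻¹ ∘ ρ_φ` is a representation of the Lie
algebra `g` on `V`. -/
theorem hom_rep_gives_lie_rep (g V : Type*) [LieRing g] [LieAlgebra ℂ g]
    [AddCommGroup V] [Module ℂ V] (φ : g →ₗ⁅ℂ⁆ g)
    (ϕ : V ≃ₗ[ℂ] V) (ρφ : g →ₗ[ℂ] V →ₗ[ℂ] V)
    (hR1 : ∀ x y : g, ρφ (φ ⁅x, y⁆) ∘ₗ (ϕ : V →ₗ[ℂ] V)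
        = ρφ (φ x) ∘ₗ ρφ y - ρφ (φ y) ∘ₗ ρφ x)
    (hR2 : ∀ x : g, ρφ (φ x) ∘ₗ (ϕ : V →ₗ[ℂ] V) = (ϕ : V →ₗ[ℂ] V) ∘ₗ ρφ x) :
    ∀ x y : g,
      (ϕ.symm : V →ₗ[ℂ] V) ∘ₗ ρφ ⁅x, y⁆
        = ((ϕ.symm : V →ₗ[ℂ] V) ∘ₗ ρφ x) ∘ₗ ((ϕ.symm : V →ₗ[ℂ] V) ∘ₗ ρφ y)
          - ((ϕ.symm : V →ₗ[ℂ] V) ∘ₗ ρφ y) ∘ₗ ((ϕ.symm : V →ₗ[ℂ] V) ∘ₗ ρφ x) := by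
  intro x y
  ext v
  have h1 := congrArg (fun f : V →ₗ[ℂ] V => f v) (hR1 x y)
  have hb := fun w => congrArg (fun f : V →ₗ[ℂ] V => f w) (hR2 ⁅x, y⁆)
  have hx := fun w => congrArg (fun f : V →ₗ[ℂ] V => f w) (hR2 x)
  have hy := fun w => congrArg (fun f : V →ₗ[ℂ] V => f w) (hR2 y)
  simp only [LinearMap.comp_apply, LinearMap.sub_apply, LinearEquiv.coe_coe] at h1 hb hx hy ⊢
  have key : (ρφ ⁅x, y⁆) v = ρφ x (ϕ.symm ((ρφ y) v)) - ρφ y (ϕ.symm ((ρφ x) v)) := by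
    apply ϕ.injective
    rw [← hb v, h1, map_sub, ← hx, ← hy, ϕ.apply_symm_apply, ϕ.apply_symm_apply]
  rw [key, map_sub]
end

section
/- Let g be a Lie algebra over ℂ, φ : g → g a Lie algebra homomorphism, and ρ : g → End(V) a representation of g on a ℂ-vector space V (so ρ([x,y]) = ρ(x)∘ρ(y) − ρ(y)∘ρ(x)). Suppose ϕ : V → V is a linear map such that ρ(φ(x)) ∘ ϕ = ϕ ∘ ρ(x) for all x ∈ g. Then ρ_φ := ϕ ∘ ρ satisfies, for all x, y ∈ g: (R1) ρ_φ(φ([x,y])) ∘ ϕ = ρ_φ(φ(x)) ∘ ρ_φ(y) − ρ_φ(φ(y)) ∘ ρ_φ(x), and (R2) ρ_φ(φ(x)) ∘ ϕ = ϕ ∘ ρ_φ(x); that is, (V, ρ_φ, ϕ) is a representation of the multiplicative Hom-Lie algebra (g, φ∘[·,·], φ). -/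
/-- If `ρ` is a representation of a Lie algebra `g` on `V`, `φ : g → g` is a Lie
algebra endomorphism, and `ϕ : V → V` is a linear map with
`ρ(φ x) ∘ ϕ = ϕ ∘ ρ x`, then `ρ_φ := ϕ ∘ ρ` satisfies the conditions (R1) and
(R2), i.e. `(V, ρ_φ, ϕ)` is a representation of the multiplicative Hom-Lie
algebra `(g, φ∘[·,·], φ)`. -/
theorem lie_rep_gives_hom_rep (g V : Type*) [LieRing g] [LieAlgebra ℂ g]
    [AddCommGroup V] [Module ℂ V] (φ : g →ₗ⁅ℂ⁆ g)
    (ρ : g →ₗ[ℂ] V →ₗ[ℂ] V)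
    (hrep : ∀ x y : g, ρ ⁅x, y⁆ = ρ x ∘ₗ ρ y - ρ y ∘ₗ ρ x)
    (ϕ : V →ₗ[ℂ] V)
    (hcomm : ∀ x : g, ρ (φ x) ∘ₗ ϕ = ϕ ∘ₗ ρ x) :
    (∀ x y : g, (ϕ ∘ₗ ρ (φ ⁅x, y⁆)) ∘ₗ ϕ
        = (ϕ ∘ₗ ρ (φ x)) ∘ₗ (ϕ ∘ₗ ρ y) - (ϕ ∘ₗ ρ (φ y)) ∘ₗ (ϕ ∘ₗ ρ x)) ∧
    (∀ x : g, (ϕ ∘ₗ ρ (φ x)) ∘ₗ ϕ = ϕ ∘ₗ (ϕ ∘ₗ ρ x)) := by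
  constructor
  · intro x y
    calc (ϕ ∘ₗ ρ (φ ⁅x, y⁆)) ∘ₗ ϕ
        = ϕ ∘ₗ (ρ (φ ⁅x, y⁆) ∘ₗ ϕ) := by rw [LinearMap.comp_assoc]
      _ = ϕ ∘ₗ (ϕ ∘ₗ ρ ⁅x, y⁆) := by rw [hcomm]
      _ = ϕ ∘ₗ (ϕ ∘ₗ (ρ x ∘ₗ ρ y - ρ y ∘ₗ ρ x)) := by rw [hrep]
      _ = (ϕ ∘ₗ ρ (φ x)) ∘ₗ (ϕ ∘ₗ ρ y) - (ϕ ∘ₗ ρ (φ y)) ∘ₗ (ϕ ∘ₗ ρ x) := by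
          have h : ∀ (z : g) (v : V), ρ (φ z) (ϕ v) = ϕ (ρ z v) :=
            fun z v => LinearMap.congr_fun (hcomm z) v
          ext v
          simp [h]
  · intro x
    rw [LinearMap.comp_assoc, hcomm]
end

section
/- Let α, β ∈ ℂ and F ∈ ℂ∖{0}, and on V define linear operators 𝕃_n, 𝕀_n by 𝕃_n(v_t) = (α+t+βn)v_{n+t} and 𝕀_n(v_t) = F·v_{n+t}. Let k ∈ ℤ∖{0}, a ∈ ℂ∖{0}, b, c, d ∈ ℂ, and suppose φ : V → V is a nonzero linear map satisfying, for all n ∈ ℤ: φ ∘ 𝕃_n = ((1/k)aⁿ·𝕃_{kn} + aⁿ(cn+d)·𝕀_{kn}) ∘ φ and φ ∘ 𝕀_n = aⁿb·𝕀_{kn} ∘ φ. Then b = 1, c = 0, q := kα − α − kFd is an integer, and there exists m ∈ ℂ∖{0} such that φ(v_t) = aᵗ·m·v_{kt+q} for all t ∈ ℤ. -/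
/-- The ℂ-vector space with basis `{v t : t ∈ ℤ}` (finitely supported functions ℤ → ℂ). -/
abbrev V : Type := ℤ →₀ ℂ

/-- The basis vector `v t`. -/
noncomputable def v (t : ℤ) : V := Finsupp.single t 1

/-- The linear operator on `V` determined by its values on the basis vectors. -/
noncomputable def op (f : ℤ → V) : V →ₗ[ℂ] V := Finsupp.lift V ℂ ℤ f

/-- The operator `𝕃 n` of the module `A(α,β,F)`: `𝕃 n (v t) = (α+t+βn) v (n+t)`. -/
noncomputable def Lop (α β : ℂ) (n : ℤ) : V →ₗ[ℂ] V :=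
  op fun t => (α + t + β * n) • v (n + t)

/-- The operator `𝕀 n` of the module `A(α,β,F)`: `𝕀 n (v t) = F • v (n+t)`. -/
noncomputable def Iop (F : ℂ) (n : ℤ) : V →ₗ[ℂ] V :=
  op fun t => F • v (n + t)

lemma op_v (f : ℤ → V) (t : ℤ) : op f (v t) = f t := by
  rw [op, Finsupp.lift_apply, v, Finsupp.sum_single_index (by simp)]
  simp

lemma op_shift_coeff (c : ℤ → ℂ) (m : ℤ) (w : V) (p : ℤ) :
    op (fun s => c s • v (m + s)) w p = c (p - m) * w (p - m) := by
  classical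
  rw [op, Finsupp.lift_apply, Finsupp.sum_apply, Finsupp.sum]
  have h : ∀ s ∈ w.support, (w s • (c s • v (m + s))) p
      = if s = p - m then w s * c s else 0 := by
    intro s _
    simp only [Finsupp.smul_apply, smul_eq_mul, v, Finsupp.single_apply]
    by_cases h : s = p - m
    · subst h; simp
    · have : ¬ (m + s = p) := by omega
      simp [this, h]
  rw [Finset.sum_congr rfl h, Finset.sum_ite_eq' w.support (p - m) (fun s => w s * c s)]
  by_cases hp : p - m ∈ w.support
  · simp [hp, mul_comm]
  · simp [hp, Finsupp.notMem_support_iff.mp hp]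

lemma Lop_coeff (α β : ℂ) (m : ℤ) (w : V) (p : ℤ) :
    (Lop α β m w) p = (α + (p - m) + β * m) * w (p - m) := by
  have := op_shift_coeff (fun s => α + s + β * m) m w p
  simpa [Lop] using this

lemma Iop_coeff (F : ℂ) (m : ℤ) (w : V) (p : ℤ) :
    (Iop F m w) p = F * w (p - m) := by
  have := op_shift_coeff (fun _ => F) m w p
  simpa [Iop] using this

lemma Lop_v (α β : ℂ) (n t : ℤ) : Lop α β n (v t) = (α + t + β * n) • v (n + t) :=
  op_v _ t

lemma Iop_v (F : ℂ) (n t : ℤ) : Iop F n (v t) = F • v (n + t) :=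
  op_v _ t

theorem A_abF_twist_classification (α β : ℂ) (F : ℂ) (hF : F ≠ 0)
    (k : ℤ) (hk : k ≠ 0) (a : ℂ) (ha : a ≠ 0) (b c d : ℂ)
    (φ : V →ₗ[ℂ] V) (hφ : φ ≠ 0)
    (hL : ∀ n : ℤ, φ ∘ₗ Lop α β n
        = ((1 / (k : ℂ) * a ^ n) • Lop α β (k * n)
            + (a ^ n * (c * n + d)) • Iop F (k * n)) ∘ₗ φ)
    (hI : ∀ n : ℤ, φ ∘ₗ Iop F n = ((a ^ n * b) • Iop F (k * n)) ∘ₗ φ) :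
    b = 1 ∧ c = 0 ∧
      ∃ q : ℤ, (q : ℂ) = k * α - α - k * F * d ∧
        ∃ m : ℂ, m ≠ 0 ∧ ∀ t : ℤ, φ (v t) = (a ^ t * m) • v (k * t + q) := by
  classical
  set f : ℤ → V := fun t => φ (v t) with hf
  have hkC : (k : ℂ) ≠ 0 := Int.cast_ne_zero.mpr hk
  have hapow : ∀ n : ℤ, a ^ n ≠ 0 := fun n => zpow_ne_zero n ha
  -- pointwise versions of the intertwining relations
  have eqI : ∀ n t p : ℤ, F * f (n + t) p = a ^ n * b * (F * f t (p - k * n)) := by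
    intro n t p
    have h := congrArg (fun g : V →ₗ[ℂ] V => g (v t)) (hI n)
    simp only [LinearMap.comp_apply, Iop_v, map_smul, LinearMap.smul_apply] at h
    have h2 := congrArg (fun w : V => w p) h
    simpa [Iop_coeff, mul_assoc] using h2
  have eqL : ∀ n t p : ℤ, (α + t + β * n) * f (n + t) p
      = 1 / (k : ℂ) * a ^ n * ((α + (p - k * n) + β * (k * n)) * f t (p - k * n))
        + a ^ n * (c * n + d) * (F * f t (p - k * n)) := by
    intro n t p
    have h := congrArg (fun g : V →ₗ[ℂ] V => g (v t)) (hL n)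
    simp only [LinearMap.comp_apply, Lop_v, map_smul, LinearMap.add_apply,
      LinearMap.smul_apply] at h
    have h2 := congrArg (fun w : V => w p) h
    simpa [Lop_coeff, Iop_coeff, mul_assoc] using h2
  -- φ nonzero gives a nonzero coefficient
  obtain ⟨t₀, s₀, hts : f t₀ s₀ ≠ 0⟩ : ∃ t s : ℤ, f t s ≠ 0 := by
    by_contra h
    push_neg at h
    apply hφ
    have hft : ∀ t, f t = 0 := by
      intro t; ext s; exact h t s
    refine LinearMap.ext fun x => ?_
    rw [LinearMap.zero_apply]
    induction x using Finsupp.induction_linear with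
    | zero => simp
    | add x y hx hy => rw [map_add, hx, hy, add_zero]
    | single t cc =>
      have hsi : Finsupp.single t cc = cc • v t := by
        rw [v, Finsupp.smul_single]; simp
      rw [hsi, map_smul, show φ (v t) = f t from rfl, hft, smul_zero]
  -- b = 1
  have hb : b = 1 := by
    have h := eqI 0 t₀ s₀
    simp only [zpow_zero, one_mul, mul_zero, sub_zero, zero_add] at h
    have h' : (b - 1) * (F * f t₀ s₀) = 0 := by linear_combination -h
    rcases mul_eq_zero.mp h' with h'' | h''
    · exact sub_eq_zero.mp h''
    · exact absurd h'' (mul_ne_zero hF hts)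
  subst hb
  -- shift relation
  have hshift : ∀ n t p : ℤ, f (n + t) p = a ^ n * f t (p - k * n) := by
    intro n t p
    have h := eqI n t p
    rw [mul_one] at h
    exact mul_left_cancel₀ hF (by linear_combination h)
  -- the constraint equation (denominators cleared)
  have G : ∀ t s n : ℤ, f t s ≠ 0 →
      (k : ℂ) * (α + t + β * n) = (α + s + β * ((k : ℂ) * n)) + k * (c * n + d) * F := by
    intro t s n hy
    have key := eqL n t (s + k * n)
    have hs : s + k * n - k * n = s := by ring
    rw [hshift, hs] at key
    apply mul_right_cancel₀ (mul_ne_zero (hapow n) hy)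
    field_simp at key
    push_cast at key
    linear_combination (a ^ n * (f t) s) * key
  have h0 := G t₀ s₀ 0 hts
  have h1 := G t₀ s₀ 1 hts
  -- c = 0
  have hc : c = 0 := by
    have hcf : (k : ℂ) * (c * F) = 0 := by
      push_cast at h0 h1
      linear_combination h0 - h1
    rcases mul_eq_zero.mp hcf with h | h
    · exact absurd h hkC
    · rcases mul_eq_zero.mp h with h' | h'
      · exact h'
      · exact absurd h' hF
  set q : ℤ := s₀ - k * t₀ with hq
  have hqcast : (q : ℂ) = k * α - α - k * F * d := by
    rw [hq]
    push_cast at h0 ⊢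
    rw [hc] at h0
    linear_combination -h0
  -- support of f t is contained in {k*t + q}
  have hsupp : ∀ t p : ℤ, f t p ≠ 0 → p = k * t + q := by
    intro t p hp
    have h2 := G t p 0 hp
    have : ((p : ℤ) : ℂ) = ((k * t + q : ℤ) : ℂ) := by
      rw [hq]
      push_cast at h0 h2 ⊢
      linear_combination h0 - h2
    exact_mod_cast this
  set m : ℂ := f 0 q with hm
  have hval : ∀ t : ℤ, f t (k * t + q) = a ^ t * m := by
    intro t
    have h := hshift t 0 (k * t + q)
    rw [add_zero] at h
    rw [h, show k * t + q - k * t = q by ring]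
  have hmne : m ≠ 0 := by
    intro h
    apply hts
    have hs0 : s₀ = k * t₀ + q := by omega
    rw [hs0, hval, h, mul_zero]
  refine ⟨rfl, hc, q, hqcast, m, hmne, fun t => ?_⟩
  ext p
  show f t p = ((a ^ t * m) • v (k * t + q)) p
  rw [v, Finsupp.smul_single, Finsupp.single_apply]
  by_cases hp : k * t + q = p
  · rw [if_pos hp, ← hp, hval, smul_eq_mul, mul_one]
  · rw [if_neg hp]
    by_contra h'
    exact hp ((hsupp t p h').symm)
end
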